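/- arXiv:math/9405210 — 3 statements merged into one kernel-verified Lean document; each statement's English description precedes it below -/
import Mathlib

section
/- If f:[1,∞)→[1,∞) is increasing, submultiplicative, and satisfies f(x) < x for x > 1, then f(n) = o(n) as n → ∞ over the natural numbers; that is, lim_{n→∞} f(n)/n = 0. -/
open Filter

/-- If f:[1,∞)→[1,∞) is increasing, submultiplicative and f(x) < x for x > 1,
then f(n)/n → 0 as n → ∞ over the naturals. -/
theorem submultiplicative_littleO (f : ℝ → ℝ)
    (hmaps : ∀ x : ℝ, 1 ≤ x → 1 ≤ f x)
    (hmono : ∀ x y : ℝ, 1 ≤ x → x ≤ y → f x ≤ f y)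
    (hsub : ∀ x y : ℝ, 1 ≤ x → 1 ≤ y → f (x * y) ≤ f x * f y)
    (hlt : ∀ x : ℝ, 1 < x → f x < x) :
    Tendsto (fun n : ℕ => f n / n) atTop (nhds 0) := by
  have hf2 : 1 ≤ f 2 := hmaps 2 (by norm_num)
  have hf2lt : f 2 < 2 := hlt 2 (by norm_num)
  set c : ℝ := f 2 / 2 with hc
  have hc0 : 0 ≤ c := by positivity
  have hc1 : c < 1 := by rw [hc]; linarith
  -- f(2^(m+1)) ≤ f(2)^(m+1)
  have hpow : ∀ m : ℕ, f ((2:ℝ) ^ (m + 1)) ≤ (f 2) ^ (m + 1) := by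
    intro m
    induction m with
    | zero => simp
    | succ m ih =>
      have h1 : (1:ℝ) ≤ (2:ℝ) ^ (m + 1) := one_le_pow₀ (by norm_num)
      calc f ((2:ℝ) ^ (m + 1 + 1)) = f ((2:ℝ) ^ (m + 1) * 2) := by ring_nf
        _ ≤ f ((2:ℝ) ^ (m + 1)) * f 2 := hsub _ _ h1 (by norm_num)
        _ ≤ (f 2) ^ (m + 1) * f 2 := by
            apply mul_le_mul_of_nonneg_right ih (by linarith)
        _ = (f 2) ^ (m + 1 + 1) := by ring
  -- key bound for n ≥ 2
  have key : ∀ n : ℕ, 2 ≤ n → f n / n ≤ f 2 * c ^ Nat.log 2 n := by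
    intro n hn
    set k := Nat.log 2 n with hk
    have h1 : 2 ^ k ≤ n := Nat.pow_log_le_self 2 (by omega)
    have h2 : n < 2 ^ (k + 1) := Nat.lt_pow_succ_log_self (by norm_num) n
    have h1R : (2:ℝ) ^ k ≤ (n:ℝ) := by exact_mod_cast h1
    have h2R : (n:ℝ) ≤ (2:ℝ) ^ (k + 1) := by
      have := h2.le; exact_mod_cast this
    have hn1 : (1:ℝ) ≤ (n:ℝ) := by exact_mod_cast Nat.one_le_of_lt hn
    have hnpos : (0:ℝ) < (n:ℝ) := by linarith
    have hfn : f n ≤ (f 2) ^ (k + 1) :=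
      le_trans (hmono _ _ hn1 h2R) (hpow k)
    have : f n / n ≤ (f 2) ^ (k + 1) / 2 ^ k := by
      apply div_le_div₀ (by positivity) hfn (by positivity) h1R
    calc f n / n ≤ (f 2) ^ (k + 1) / 2 ^ k := this
      _ = f 2 * c ^ k := by
          rw [hc, div_pow, pow_succ]
          field_simp
  -- the majorant tends to 0
  have hlog : Tendsto (fun n : ℕ => Nat.log 2 n) atTop atTop := by
    apply tendsto_atTop_atTop.2
    intro b
    refine ⟨2 ^ b, fun n hn => ?_⟩
    have hn0 : n ≠ 0 := by have := Nat.one_le_two_pow (n := b); omega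
    exact (Nat.le_log_iff_pow_le (by norm_num) hn0).2 hn
  have hcpow : Tendsto (fun k : ℕ => c ^ k) atTop (nhds 0) :=
    tendsto_pow_atTop_nhds_zero_of_lt_one hc0 hc1
  have hmaj : Tendsto (fun n : ℕ => f 2 * c ^ Nat.log 2 n) atTop (nhds 0) := by
    have := (hcpow.comp hlog).const_mul (f 2)
    simpa using this
  apply squeeze_zero' ?_ ?_ hmaj
  · filter_upwards [eventually_ge_atTop 1] with n hn
    have : (1:ℝ) ≤ (n:ℝ) := by exact_mod_cast hn
    have := hmaps n this
    positivity
  · filter_upwards [eventually_ge_atTop 2] with n hn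
    exact key n hn
end

section
/- Suppose (β_n)_{n≥1} is a sequence of positive reals with β_{mn} ≥ β_m · β_n for all m,n ≥ 1, β_n ≥ n^{1/q} for all n, and β_n ≤ f(n) · n^{1/q} for all n, where q ≥ 1 and f:[1,∞)→[1,∞) satisfies lim_{x→∞} f(x) x^{-a} = 0 for every a > 0. Then β_n = n^{1/q} for all n. -/
open Filter

/-- If (β_n) is supermultiplicative, β_n ≥ n^{1/q}, and β_n ≤ f(n)·n^{1/q} where
f(x) = o(x^a) for all a > 0, then β_n = n^{1/q} for all n ≥ 1. -/
theorem supermultiplicative_eq_rpow (q : ℝ) (hq : 1 ≤ q) (f : ℝ → ℝ)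
    (hf1 : ∀ x : ℝ, 1 ≤ x → 1 ≤ f x)
    (hfo : ∀ a : ℝ, 0 < a → Tendsto (fun x : ℝ => f x * x ^ (-a)) atTop (nhds 0))
    (β : ℕ → ℝ) (hpos : ∀ n : ℕ, 1 ≤ n → 0 < β n)
    (hsuper : ∀ m n : ℕ, 1 ≤ m → 1 ≤ n → β m * β n ≤ β (m * n))
    (hlower : ∀ n : ℕ, 1 ≤ n → (n : ℝ) ^ (1 / q) ≤ β n)
    (hupper : ∀ n : ℕ, 1 ≤ n → β n ≤ f n * (n : ℝ) ^ (1 / q)) :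
    ∀ n : ℕ, 1 ≤ n → β n = (n : ℝ) ^ (1 / q) := by
  -- β (n^k) ≥ (β n)^k for k ≥ 1
  have hpow : ∀ n : ℕ, 1 ≤ n → ∀ k : ℕ, 1 ≤ k → (β n) ^ k ≤ β (n ^ k) := by
    intro n hn k hk
    induction k with
    | zero => omega
    | succ k ih =>
      rcases Nat.eq_or_lt_of_le hk with h | h
      · simp [← h]
      · have hk1 : 1 ≤ k := by omega
        calc (β n) ^ (k + 1) = (β n) ^ k * β n := by ring
          _ ≤ β (n ^ k) * β n :=
              mul_le_mul_of_nonneg_right (ih hk1) (hpos n hn).le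
          _ ≤ β (n ^ k * n) := hsuper _ _ (Nat.one_le_pow _ _ (by omega)) hn
          _ = β (n ^ (k + 1)) := by ring_nf
  intro n hn
  rcases Nat.eq_or_lt_of_le hn with h1 | h2
  · -- n = 1
    have h11 := hsuper 1 1 le_rfl le_rfl
    have hb1 : 0 < β 1 := hpos 1 le_rfl
    have hge : (1 : ℝ) ≤ β 1 := by simpa using hlower 1 le_rfl
    have hle : β 1 ≤ 1 := by simp at h11; nlinarith
    rw [← h1]
    simp
    linarith
  · -- n ≥ 2
    have hn2 : 2 ≤ n := h2
    have hnR : (2 : ℝ) ≤ (n : ℝ) := by exact_mod_cast hn2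
    have hn0 : (0 : ℝ) < n := by linarith
    refine le_antisymm ?_ (hlower n hn)
    -- key: ∀ a > 0, β n ≤ n ^ (1/q + a)
    have key : ∀ a : ℝ, 0 < a → β n ≤ (n : ℝ) ^ (1 / q + a) := by
      intro a ha
      have hev : ∀ᶠ x : ℝ in atTop, f x * x ^ (-a) < 1 :=
        (hfo a ha).eventually_lt_const one_pos
      rw [eventually_atTop] at hev
      obtain ⟨X, hX⟩ := hev
      have htend : Tendsto (fun k : ℕ => (n : ℝ) ^ k) atTop atTop :=
        tendsto_pow_atTop_atTop_of_one_lt (by linarith)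
      obtain ⟨k, hkX, hk1⟩ := ((htend.eventually_ge_atTop (max X 1)).and
        (eventually_ge_atTop 1)).exists
      set x : ℝ := (n : ℝ) ^ k with hxdef
      have hx1 : (1 : ℝ) ≤ x := le_trans (le_max_right X 1) hkX
      have hxX : X ≤ x := le_trans (le_max_left X 1) hkX
      have hx0 : (0 : ℝ) < x := by linarith
      have hfx : f x ≤ x ^ a := by
        have h := hX x hxX
        rw [Real.rpow_neg hx0.le] at h
        have hxa : (0 : ℝ) < x ^ a := Real.rpow_pos_of_pos hx0 _
        rw [mul_inv_lt_iff₀' hxa, mul_one] at h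
        linarith
      have hcast : ((n ^ k : ℕ) : ℝ) = x := by push_cast [hxdef]; ring
      have hnk1 : 1 ≤ n ^ k := Nat.one_le_pow _ _ (by omega)
      have hchain : (β n) ^ k ≤ ((n : ℝ) ^ (1 / q + a)) ^ k := by
        calc (β n) ^ k ≤ β (n ^ k) := hpow n hn k hk1
          _ ≤ f (n ^ k : ℕ) * ((n ^ k : ℕ) : ℝ) ^ (1 / q) := hupper _ hnk1
          _ = f x * x ^ (1 / q) := by rw [hcast]
          _ ≤ x ^ a * x ^ (1 / q) :=
              mul_le_mul_of_nonneg_right hfx (Real.rpow_pos_of_pos hx0 _).le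
          _ = x ^ (1 / q + a) := by
              rw [← Real.rpow_add hx0]; ring_nf
          _ = ((n : ℝ) ^ (1 / q + a)) ^ k := by
              rw [hxdef, ← Real.rpow_natCast ((n : ℝ)) k,
                ← Real.rpow_mul hn0.le,
                ← Real.rpow_natCast ((n : ℝ) ^ (1 / q + a)) k,
                ← Real.rpow_mul hn0.le]
              ring_nf
      exact le_of_pow_le_pow_left₀ (by omega) (Real.rpow_pos_of_pos hn0 _).le hchain
    -- take a → 0 along 1/(j+1)
    have htend : Tendsto (fun j : ℕ => (n : ℝ) ^ (1 / q + 1 / (j + 1 : ℝ)))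
        atTop (nhds ((n : ℝ) ^ (1 / q))) := by
      have h1 : Tendsto (fun j : ℕ => 1 / q + 1 / (j + 1 : ℝ)) atTop
          (nhds (1 / q + 0)) :=
        tendsto_const_nhds.add tendsto_one_div_add_atTop_nhds_zero_nat
      rw [add_zero] at h1
      exact (Filter.Tendsto.rpow tendsto_const_nhds h1 (Or.inl hn0.ne')) |>.congr
        (fun j => rfl)
    refine ge_of_tendsto' htend (fun j => key _ ?_)
    positivity
end

section
/- Let X be a normed space over ℝ, let p ∈ (1,2], and suppose the norm satisfies (‖x+y‖^p + ‖x−y‖^p)/2 ≤ ‖x‖^p + ‖y‖^p for all x, y. Then there is a constant K > 0 (depending only on p) such that the modulus of smoothness satisfies ρ_X(τ) ≤ K τ^p for 0 ≤ τ ≤ 1. -/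
/-- The modulus of smoothness of a normed space:
ρ_X(τ) = sup{(‖x+τy‖ + ‖x−τy‖)/2 − 1 : ‖x‖ = ‖y‖ = 1}. -/
noncomputable def modulusOfSmoothness (X : Type) [NormedAddCommGroup X]
    [NormedSpace ℝ X] (τ : ℝ) : ℝ :=
  sSup {d : ℝ | ∃ x y : X, ‖x‖ = 1 ∧ ‖y‖ = 1 ∧
    d = (‖x + τ • y‖ + ‖x - τ • y‖) / 2 - 1}

lemma mean_rpow_aux {a b p : ℝ} (ha : 0 ≤ a) (hb : 0 ≤ b) (hp : 1 ≤ p) :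
    ((a + b) / 2) ^ p ≤ (a ^ p + b ^ p) / 2 := by
  have h := Real.rpow_arith_mean_le_arith_mean_rpow Finset.univ ![(1:ℝ)/2, 1/2] ![a, b]
    (by intro i _; fin_cases i <;> norm_num)
    (by simp [Fin.sum_univ_two]; norm_num)
    (by intro i _; fin_cases i <;> simpa) hp
  simp only [Fin.sum_univ_two, Matrix.cons_val_zero, Matrix.cons_val_one, Matrix.head_cons] at h
  calc ((a + b) / 2) ^ p = (1/2 * a + 1/2 * b) ^ p := by ring_nf
    _ ≤ 1/2 * a ^ p + 1/2 * b ^ p := h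
    _ = (a ^ p + b ^ p) / 2 := by ring

/-- If the norm satisfies the Clarkson-type inequality with exponent p ∈ (1,2],
then ρ_X(τ) ≤ K τ^p on [0,1], with K depending only on p. -/
theorem modulus_of_smoothness_upper_bound (p : ℝ) (hp1 : 1 < p) (hp2 : p ≤ 2) :
    ∃ K : ℝ, 0 < K ∧
      ∀ (X : Type) [NormedAddCommGroup X] [NormedSpace ℝ X],
        (∀ x y : X, (‖x + y‖ ^ p + ‖x - y‖ ^ p) / 2 ≤ ‖x‖ ^ p + ‖y‖ ^ p) →
        ∀ τ : ℝ, 0 ≤ τ → τ ≤ 1 → modulusOfSmoothness X τ ≤ K * τ ^ p := by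
  refine ⟨1, one_pos, ?_⟩
  intro X _ _ hC τ hτ0 hτ1
  have hτp : (0:ℝ) ≤ τ ^ p := Real.rpow_nonneg hτ0 p
  rw [one_mul]
  apply Real.sSup_le _ hτp
  rintro d ⟨x, y, hx, hy, rfl⟩
  have hnorm : ‖τ • y‖ = τ := by rw [norm_smul, hy, Real.norm_eq_abs, abs_of_nonneg hτ0, mul_one]
  have hclark := hC x (τ • y)
  rw [hx, hnorm, Real.one_rpow] at hclark
  set a := ‖x + τ • y‖ with ha
  set b := ‖x - τ • y‖ with hb
  have hmean : ((a + b) / 2) ^ p ≤ 1 + τ ^ p :=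
    le_trans (mean_rpow_aux (norm_nonneg _) (norm_nonneg _) hp1.le) hclark
  set m := (a + b) / 2 with hm
  rcases le_or_gt m 1 with h | h
  · linarith
  · have hm1 : (1:ℝ) ≤ m := h.le
    have : m = m ^ (1:ℝ) := (Real.rpow_one m).symm
    have hle : m ≤ m ^ p := by
      calc m = m ^ (1:ℝ) := (Real.rpow_one m).symm
        _ ≤ m ^ p := Real.rpow_le_rpow_of_exponent_le hm1 hp1.le
    linarith
end
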